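/- Let M = (S, ρ) be a matroid scheme with no loops and let F = F(M) be its poset of flats, with Möbius function μ_F. Then for every flat w ∈ F, μ_F(w) = Σ_{u ∈ S, cl(u) = w} (−1)^{|u|}. -/

import Mathlib

/-- The set of minimal upper bounds of `x` and `y` (denoted `x ∨ y` in the paper). -/
def mub {S : Type*} [PartialOrder S] (x y : S) : Set S :=
  {u | x ≤ u ∧ y ≤ u ∧ ∀ v, x ≤ v → y ≤ v → v ≤ u → v = u}

/-- The set of maximal lower bounds of `x` and `y` (denoted `x ∧ y` in the paper). -/
def mlb {S : Type*} [PartialOrder S] (x y : S) : Set S :=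
  {l | l ≤ x ∧ l ≤ y ∧ ∀ m, m ≤ x → m ≤ y → l ≤ m → m = l}

/-- The set of minimal upper bounds of a subset `T`. -/
def mubSet {S : Type*} [PartialOrder S] (T : Set S) : Set S :=
  {u | (∀ t ∈ T, t ≤ u) ∧ ∀ v, (∀ t ∈ T, t ≤ v) → v ≤ u → v = u}

/-- The number of atoms below `x`, i.e. `|x|`, the rank of `x` in a simplicial poset. -/
noncomputable def natRank {S : Type*} [PartialOrder S] [OrderBot S] (x : S) : ℕ :=
  Nat.card {a : S // IsAtom a ∧ a ≤ x}

/-- A finite bounded-below poset is simplicial if every lower interval is isomorphic to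
the Boolean lattice of subsets of the set of atoms below. -/
def IsSimplicialPoset (S : Type*) [PartialOrder S] [OrderBot S] [Fintype S] : Prop :=
  ∀ x : S, Nonempty (Set.Iic x ≃o Set {a : S // IsAtom a ∧ a ≤ x})

/-- A matroid scheme: a rank function `ρ` on a finite simplicial poset `S`
satisfying (M1)–(M5). -/
structure IsMatroidScheme {S : Type*} [PartialOrder S] [OrderBot S] [Fintype S]
    (ρ : S → ℕ) : Prop where
  simplicial : IsSimplicialPoset S
  M1 : ∀ x : S, ρ x ≤ natRank x
  M2 : ∀ ⦃x y : S⦄, x ≤ y → ρ x ≤ ρ y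
  M3 : ∀ x y u l : S, u ∈ mub x y → l ∈ mlb x y → ρ u + ρ l ≤ ρ x + ρ y
  M4 : ∀ x y l : S, l ∈ mlb x y → ρ x = ρ l → (mub x y).Nonempty
  M5 : ∀ x y : S, ρ x < ρ y →
    ∃ a : S, IsAtom a ∧ a ≤ y ∧ ¬ a ≤ x ∧ (mub x a).Nonempty

/-- `cl` is the closure operator of a matroid scheme `(S, ρ)`:
`cl x` is the greatest element above `x` of the same rank. -/
def IsClosureFun {S : Type*} [PartialOrder S] (ρ : S → ℕ) (cl : S → S) : Prop :=
  ∀ x : S, x ≤ cl x ∧ ρ (cl x) = ρ x ∧ ∀ y : S, x ≤ y → ρ y = ρ x → y ≤ cl x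

/-- The bases of a matroid scheme: the maximal independent elements. -/
def Bases {S : Type*} [PartialOrder S] [OrderBot S] (ρ : S → ℕ) : Set S :=
  {x | ρ x = natRank x ∧ ∀ w, ρ w = natRank w → x ≤ w → w = x}

/-- The circuits of a matroid scheme: the minimal dependent elements. -/
def Circuits {S : Type*} [PartialOrder S] [OrderBot S] (ρ : S → ℕ) : Set S :=
  {x | ρ x < natRank x ∧ ∀ y, ρ y < natRank y → y ≤ x → y = x}

/-- `c` is the complement `x ∖ a` of `a` in the Boolean lattice `S_{≤ x}`. -/
def IsComplementIn {S : Type*} [PartialOrder S] [OrderBot S] (c a x : S) : Prop :=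
  c ≤ x ∧ a ≤ x ∧ (∀ l : S, l ≤ c → l ≤ a → l = ⊥) ∧
    (∀ u : S, u ≤ x → c ≤ u → a ≤ u → u = x)

/-- The rank of a matroid scheme: the common value of `ρ` on maximal elements
(equal to the maximum value of `ρ`). -/
noncomputable def schemeRank {S : Type*} [Fintype S] (ρ : S → ℕ) : ℕ :=
  sSup (Set.range ρ)

/-- The Tutte polynomial of a matroid scheme, as a two-variable integer function. -/
noncomputable def tutte {S : Type*} [PartialOrder S] [OrderBot S] [Fintype S]
    (ρ : S → ℕ) (x y : ℤ) : ℤ :=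
  ∑ w : S, (x - 1) ^ (schemeRank ρ - ρ w) * (y - 1) ^ (natRank w - ρ w)

/-- An element of a poset is an order-atom if it covers a global minimum. -/
def OrdAtom {P : Type*} [PartialOrder P] (a : P) : Prop :=
  ∃ b : P, (∀ z : P, b ≤ z) ∧ b ⋖ a

/-- A partial order is a geometric lattice: it is bounded below, every pair has a least
upper bound and greatest lower bound, it is atomistic, and it is (upper) semimodular. -/
def IsGeomLatOrder (P : Type*) [PartialOrder P] : Prop :=
  (∃ b : P, ∀ x : P, b ≤ x) ∧
  (∀ x y : P, ∃ u : P, IsLUB {x, y} u) ∧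
  (∀ x y : P, ∃ l : P, IsGLB {x, y} l) ∧
  (∀ x : P, IsLUB {a : P | OrdAtom a ∧ a ≤ x} x) ∧
  (∀ x y m j : P, IsGLB {x, y} m → IsLUB {x, y} j → m ⋖ x → y ⋖ j)

/-- A geometric poset: a finite bounded-below poset with rank function `rk`
satisfying (G1) and (G2). -/
def IsGeometricPoset (P : Type*) [PartialOrder P] [OrderBot P] [Fintype P]
    (rk : P → ℕ) : Prop :=
  rk ⊥ = 0 ∧
  (∀ ⦃x y : P⦄, x ≤ y → rk x ≤ rk y) ∧
  (∀ x y : P, x ⋖ y → rk y = rk x + 1) ∧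
  (∀ m : P, IsMax m → IsGeomLatOrder (Set.Iic m)) ∧
  (∀ (x : P) (A : Set P), (∀ a ∈ A, IsAtom a) →
    ∀ y ∈ mubSet A, rk x < rk y → rk y = Nat.card A →
      ∃ a ∈ A, ¬ a ≤ x ∧ ∃ w : P, x ≤ w ∧ a ≤ w)


section Aux

variable {S : Type*} [PartialOrder S] [OrderBot S] [Fintype S]

lemma aux_exists_atom_le {x : S} (hx : x ≠ ⊥) : ∃ a : S, IsAtom a ∧ a ≤ x := by
  obtain ⟨b, hbx, hmin⟩ :=
    exists_minimal_le_of_wellFoundedLT (fun z => z ≠ ⊥ ∧ z ≤ x) x ⟨hx, le_rfl⟩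
  refine ⟨b, ⟨hmin.1.1, fun c hc => ?_⟩, hmin.1.2⟩
  by_contra hcne
  exact absurd (hmin.2 ⟨hcne, hc.le.trans hmin.1.2⟩ hc.le) (not_le_of_gt hc)

lemma aux_natRank_bot : natRank (⊥ : S) = 0 := by
  have : IsEmpty {a : S // IsAtom a ∧ a ≤ (⊥ : S)} :=
    ⟨fun a => a.2.1.1 (le_bot_iff.mp a.2.2)⟩
  rw [natRank]
  exact Nat.card_of_isEmpty

lemma aux_rho_bot {ρ : S → ℕ} (h : IsMatroidScheme ρ) : ρ ⊥ = 0 :=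
  Nat.le_zero.mp (aux_natRank_bot (S := S) ▸ h.M1 ⊥)

lemma aux_cl_bot {ρ : S → ℕ} {cl : S → S} (h : IsMatroidScheme ρ)
    (hcl : IsClosureFun ρ cl) (hnoloop : ∀ a : S, IsAtom a → ρ a ≠ 0) :
    cl (⊥ : S) = ⊥ := by
  by_contra hne
  obtain ⟨a, ha, hax⟩ := aux_exists_atom_le hne
  have h1 : ρ a ≤ ρ (cl ⊥) := h.M2 hax
  rw [(hcl ⊥).2.1, aux_rho_bot h] at h1
  exact hnoloop a ha (Nat.le_zero.mp h1)

lemma aux_cl_idem {ρ : S → ℕ} {cl : S → S} (hcl : IsClosureFun ρ cl) (x : S) :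
    cl (cl x) = cl x := by
  refine le_antisymm ((hcl x).2.2 _ ((hcl x).1.trans (hcl (cl x)).1) ?_) (hcl (cl x)).1
  rw [(hcl (cl x)).2.1, (hcl x).2.1]

lemma aux_cl_mono {ρ : S → ℕ} {cl : S → S} (h : IsMatroidScheme ρ)
    (hcl : IsClosureFun ρ cl) {u w : S} (huw : u ≤ w) : cl u ≤ cl w := by
  obtain ⟨l, hul, hlmax⟩ :=
    Finite.exists_le_maximal (p := fun m => m ≤ cl u ∧ m ≤ w) (a := u) ⟨(hcl u).1, huw⟩
  have hlmlb : l ∈ mlb (cl u) w :=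
    ⟨hlmax.1.1, hlmax.1.2, fun m hm1 hm2 hlm => le_antisymm (hlmax.2 ⟨hm1, hm2⟩ hlm) hlm⟩
  have hρl : ρ (cl u) = ρ l := by
    have h1 : ρ u ≤ ρ l := h.M2 hul
    have h2 : ρ l ≤ ρ (cl u) := h.M2 hlmax.1.1
    have h3 := (hcl u).2.1
    omega
  obtain ⟨v, hv⟩ := h.M4 (cl u) w l hlmlb hρl
  have h3 := h.M3 (cl u) w v l hv hlmlb
  have h4 : ρ w ≤ ρ v := h.M2 hv.2.1
  have h5 : ρ v = ρ w := by omega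
  exact hv.1.trans ((hcl w).2.2 v hv.2.1 h5)

lemma aux_isAtom_Iic_iff {w : S} (x : Set.Iic w) : IsAtom x ↔ IsAtom x.val := by
  constructor
  · rintro ⟨h1, h2⟩
    refine ⟨fun hb => h1 (Subtype.ext (by rw [hb, Set.Iic.coe_bot])), fun c hc => ?_⟩
    have hcw : c ∈ Set.Iic w := le_trans hc.le x.2
    have h3 := h2 ⟨c, hcw⟩ (Subtype.mk_lt_mk.mpr hc)
    have h4 := congrArg Subtype.val h3
    rwa [Set.Iic.coe_bot] at h4
  · rintro ⟨h1, h2⟩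
    refine ⟨fun hb => h1 (by rw [hb, Set.Iic.coe_bot]), fun c hc => ?_⟩
    have hc2 : c.val = ⊥ := h2 c.val (Subtype.coe_lt_coe.mpr hc)
    exact Subtype.ext (by rw [hc2, Set.Iic.coe_bot])

lemma aux_natRank_eq {w : S} (e : Set.Iic w ≃o Set {a : S // IsAtom a ∧ a ≤ w})
    (u : Set.Iic w) :
    natRank u.val = Nat.card (e u : Set {a : S // IsAtom a ∧ a ≤ w}) := by
  classical
  apply Nat.card_congr
  let lift : {a : S // IsAtom a ∧ a ≤ u.val} → Set.Iic w :=
    fun p => ⟨p.val, Set.mem_Iic.mpr (le_trans p.2.2 (Set.mem_Iic.mp u.2))⟩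
  have hlift_atom : ∀ p, IsAtom (lift p) := fun p => (aux_isAtom_Iic_iff _).mpr p.2.1
  have hlift_le : ∀ p, lift p ≤ u := fun p => p.2.2
  have atomimg : ∀ p, ∃ b : {a : S // IsAtom a ∧ a ≤ w}, e (lift p) = {b} := by
    intro p
    exact Set.isAtom_iff.mp ((OrderIso.isAtom_iff e _).mpr (hlift_atom p))
  choose f hf using atomimg
  have hfmem : ∀ p, f p ∈ (e u : Set _) := by
    intro p
    have hsub : e (lift p) ⊆ e u := e.le_iff_le.mpr (hlift_le p)
    exact hsub (by rw [hf p]; exact Set.mem_singleton _)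
  refine Equiv.ofBijective (fun p => ⟨f p, hfmem p⟩) ⟨?_, ?_⟩
  · intro p q hpq
    have hfpq : f p = f q := congrArg Subtype.val hpq
    have hl : lift p = lift q := e.injective (by rw [hf p, hf q, hfpq])
    have hv := congrArg Subtype.val hl
    exact Subtype.ext hv
  · rintro ⟨b, hb⟩
    have hxatom : IsAtom (e.symm {b}) := by
      rw [← OrderIso.isAtom_iff e, e.apply_symm_apply]
      exact Set.isAtom_singleton b
    have hxu : e.symm {b} ≤ u := by
      rw [← e.le_iff_le, e.apply_symm_apply]
      exact Set.singleton_subset_iff.mpr hb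
    refine ⟨⟨(e.symm {b}).val, (aux_isAtom_Iic_iff _).mp hxatom,
      Subtype.coe_le_coe.mpr hxu⟩, ?_⟩
    apply Subtype.ext
    have hlifteq : lift ⟨(e.symm {b}).val, (aux_isAtom_Iic_iff _).mp hxatom,
        Subtype.coe_le_coe.mpr hxu⟩ = e.symm {b} := Subtype.ext rfl
    have hsing : ({f ⟨(e.symm {b}).val, (aux_isAtom_Iic_iff _).mp hxatom,
        Subtype.coe_le_coe.mpr hxu⟩} : Set {a : S // IsAtom a ∧ a ≤ w}) = {b} := by
      rw [← hf ⟨(e.symm {b}).val, (aux_isAtom_Iic_iff _).mp hxatom,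
        Subtype.coe_le_coe.mpr hxu⟩, hlifteq, e.apply_symm_apply]
    exact Set.singleton_eq_singleton_iff.mp hsing

open Classical in
lemma aux_sum_boolean (hs : IsSimplicialPoset S) (w : S) :
    (∑ u : S, (if u ≤ w then (-1 : ℤ) ^ natRank u else 0)) = if w = ⊥ then 1 else 0 := by
  classical
  obtain ⟨e⟩ := hs w
  have h1 : (∑ u : S, (if u ≤ w then (-1 : ℤ) ^ natRank u else 0))
      = ∑ u : Set.Iic w, (-1 : ℤ) ^ natRank u.val := by
    rw [← Finset.sum_filter]
    exact Finset.sum_subtype _ (by simp [Set.mem_Iic]) _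
  have h2 : (∑ u : Set.Iic w, (-1 : ℤ) ^ natRank u.val)
      = ∑ T : Set {a : S // IsAtom a ∧ a ≤ w}, (-1 : ℤ) ^ Nat.card T := by
    rw [Finset.sum_congr rfl (fun u _ => by rw [aux_natRank_eq e u])]
    exact Fintype.sum_equiv e.toEquiv _ _ (fun u => rfl)
  have h3 : (∑ T : Set {a : S // IsAtom a ∧ a ≤ w}, (-1 : ℤ) ^ Nat.card T)
      = ∑ T : Finset {a : S // IsAtom a ∧ a ≤ w}, (-1 : ℤ) ^ T.card := by
    refine (Fintype.sum_equiv Fintype.finsetEquivSet _ _ ?_).symm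
    intro T
    have : Nat.card (Fintype.finsetEquivSet T : Set {a : S // IsAtom a ∧ a ≤ w}) = T.card := by
      rw [Fintype.coe_finsetEquivSet]
      rw [Nat.card_coe_set_eq, Set.ncard_coe_finset]
    rw [this]
  rw [h1, h2, h3, ← Finset.powerset_univ, Finset.sum_powerset_neg_one_pow_card]
  have hiff : ((Finset.univ : Finset {a : S // IsAtom a ∧ a ≤ w}) = ∅) ↔ w = ⊥ := by
    rw [Finset.univ_eq_empty_iff]
    constructor
    · intro hE
      by_contra hw
      obtain ⟨a, ha⟩ := aux_exists_atom_le hw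
      exact hE.false ⟨a, ha⟩
    · intro hw
      subst hw
      exact ⟨fun a => a.2.1.1 (le_bot_iff.mp a.2.2)⟩
  simp only [hiff]

end Aux

open Classical in
/-- Lemma 11.1: in a loopless matroid scheme, the Möbius function of the poset of
flats is given by `μ(w) = Σ_{u : cl u = w} (−1)^{|u|}`. -/
theorem statement18 {S : Type*} [PartialOrder S] [OrderBot S] [Fintype S]
    (ρ : S → ℕ) (h : IsMatroidScheme ρ) (cl : S → S) (hcl : IsClosureFun ρ cl)
    (hnoloop : ∀ a : S, IsAtom a → ρ a ≠ 0)
    (μ : {x : S // cl x = x} → ℤ) (b : {x : S // cl x = x})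
    (hb : ∀ z : {x : S // cl x = x}, b ≤ z)
    (hμb : μ b = 1)
    (hμ : ∀ w : {x : S // cl x = x}, b < w →
      ∑ u : {x : S // cl x = x}, (if u ≤ w then μ u else 0) = 0) :
    ∀ w : {x : S // cl x = x},
      μ w = ∑ u : S, (if cl u = w.val then (-1 : ℤ) ^ (natRank u) else 0) := by
  classical
  have hclself : ∀ x : S, cl (cl x) = cl x := aux_cl_idem hcl
  have hbbot : b.val = ⊥ := by
    have hfb : cl (⊥ : S) = ⊥ := aux_cl_bot h hcl hnoloop
    have h1 : b ≤ (⟨⊥, hfb⟩ : {x : S // cl x = x}) := hb _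
    have h2 : (⟨⊥, hfb⟩ : {x : S // cl x = x}) ≤ b := bot_le
    exact le_antisymm h1 h2
  -- the recursion for the candidate function
  have hrec : ∀ w : {x : S // cl x = x},
      (∑ v : {x : S // cl x = x},
        if v ≤ w then (∑ u : S, if cl u = v.val then (-1 : ℤ) ^ natRank u else 0) else 0)
      = if w.val = ⊥ then 1 else 0 := by
    intro w
    have step1 : ∀ v : {x : S // cl x = x},
        (if v ≤ w then (∑ u : S, if cl u = v.val then (-1 : ℤ) ^ natRank u else 0) else 0)
        = ∑ u : S, if cl u = v.val ∧ v ≤ w then (-1 : ℤ) ^ natRank u else 0 := by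
      intro v
      by_cases hvw : v ≤ w
      · rw [if_pos hvw]
        refine Finset.sum_congr rfl (fun u _ => ?_)
        by_cases hcu : cl u = v.val
        · rw [if_pos hcu, if_pos ⟨hcu, hvw⟩]
        · rw [if_neg hcu, if_neg (fun hh => hcu hh.1)]
      · rw [if_neg hvw]
        refine (Finset.sum_eq_zero (fun u _ => ?_)).symm
        exact if_neg (fun hh => hvw hh.2)
    rw [Finset.sum_congr rfl (fun v _ => step1 v), Finset.sum_comm]
    have step2 : ∀ u : S,
        (∑ v : {x : S // cl x = x}, if cl u = v.val ∧ v ≤ w then (-1 : ℤ) ^ natRank u else 0)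
        = if u ≤ w.val then (-1 : ℤ) ^ natRank u else 0 := by
      intro u
      rw [Finset.sum_eq_single (⟨cl u, hclself u⟩ : {x : S // cl x = x})]
      · have hiff : (cl u = (⟨cl u, hclself u⟩ : {x : S // cl x = x}).val ∧
            (⟨cl u, hclself u⟩ : {x : S // cl x = x}) ≤ w) ↔ u ≤ w.val := by
          constructor
          · intro hh
            exact le_trans (hcl u).1 hh.2
          · intro hh
            refine ⟨rfl, ?_⟩
            show cl u ≤ w.val
            have := aux_cl_mono h hcl hh
            rwa [w.2] at this
        by_cases hc : u ≤ w.val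
        · rw [if_pos (hiff.mpr hc), if_pos hc]
        · rw [if_neg (fun hh => hc (hiff.mp hh)), if_neg hc]
      · intro v _ hv
        exact if_neg (fun hh => hv (Subtype.ext hh.1.symm))
      · intro hmem
        exact absurd (Finset.mem_univ _) hmem
    rw [Finset.sum_congr rfl (fun u _ => step2 u)]
    exact aux_sum_boolean h.simplicial w.val
  -- splitting a sum over `≤ w` into the term at `w` plus the sum over `< w`
  have split : ∀ (f : {x : S // cl x = x} → ℤ) (w : {x : S // cl x = x}),
      (∑ v : {x : S // cl x = x}, if v ≤ w then f v else 0)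
      = f w + ∑ v : {x : S // cl x = x}, if v < w then f v else 0 := by
    intro f w
    have hpt : ∀ v : {x : S // cl x = x},
        (if v ≤ w then f v else 0) = (if v = w then f v else 0) + (if v < w then f v else 0) := by
      intro v
      by_cases h1 : v = w
      · subst h1
        simp
      · by_cases h2 : v < w
        · rw [if_pos h2.le, if_neg h1, if_pos h2, zero_add]
        · have h3 : ¬ v ≤ w := fun hh => h2 (lt_of_le_of_ne hh h1)
          rw [if_neg h3, if_neg h1, if_neg h2, zero_add]
    rw [Finset.sum_congr rfl (fun v _ => hpt v), Finset.sum_add_distrib,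
      Finset.sum_ite_eq' Finset.univ w f, if_pos (Finset.mem_univ w)]
  -- main induction
  have main : ∀ w : {x : S // cl x = x},
      μ w = ∑ u : S, if cl u = w.val then (-1 : ℤ) ^ natRank u else 0 := by
    intro w
    induction w using WellFoundedLT.induction with
    | _ w IH =>
      by_cases hwb : w = b
      · subst hwb
        rw [hμb, hbbot]
        have hcu : ∀ u : S, (cl u = ⊥) ↔ (u = ⊥) := by
          intro u
          constructor
          · intro hh
            exact le_bot_iff.mp (hh ▸ (hcl u).1)
          · intro hh
            subst hh
            exact aux_cl_bot h hcl hnoloop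
        have : (∑ u : S, if cl u = (⊥ : S) then (-1 : ℤ) ^ natRank u else 0)
            = ∑ u : S, if u = (⊥ : S) then (-1 : ℤ) ^ natRank u else 0 := by
          refine Finset.sum_congr rfl (fun u _ => ?_)
          by_cases hh : u = ⊥
          · rw [if_pos ((hcu u).mpr hh), if_pos hh]
          · rw [if_neg (fun hx => hh ((hcu u).mp hx)), if_neg hh]
        rw [this, Finset.sum_ite_eq' Finset.univ (⊥ : S), if_pos (Finset.mem_univ _),
          aux_natRank_bot, pow_zero]
      · have hbw : b < w := lt_of_le_of_ne (hb w) (Ne.symm hwb)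
        have hwbot : w.val ≠ ⊥ := by
          intro hh
          apply hwb
          apply Subtype.ext
          rw [hh, hbbot]
        have hμw := hμ w hbw
        have hνw := hrec w
        rw [if_neg hwbot] at hνw
        rw [split μ w] at hμw
        rw [split (fun v => ∑ u : S, if cl u = v.val then (-1 : ℤ) ^ natRank u else 0) w] at hνw
        have hIH : (∑ v : {x : S // cl x = x}, if v < w then μ v else 0)
            = ∑ v : {x : S // cl x = x},
                if v < w then (∑ u : S, if cl u = v.val then (-1 : ℤ) ^ natRank u else 0) else 0 := by
          refine Finset.sum_congr rfl (fun v _ => ?_)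
          by_cases hvw : v < w
          · rw [if_pos hvw, if_pos hvw, IH v hvw]
          · rw [if_neg hvw, if_neg hvw]
        rw [hIH] at hμw
        linarith
  exact main
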